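/- Let ω be a smooth differential p-form on an open set U ⊆ ℝⁿ having constant coefficients on a neighbourhood of x ∈ U. Then there is an open neighbourhood V of x on which: (1) the dimension of the subspace D_y = {v ∈ ℝⁿ : i_vω_y = 0} is constant in y ∈ V; and (2) the distribution D is involutive: for any smooth vector fields X, Y : V → ℝⁿ with X_y ∈ D_y and Y_y ∈ D_y for all y ∈ V, the Lie bracket [X,Y]_y = DY_y(X_y) − DX_y(Y_y) lies in D_y for all y ∈ V. -/

import Mathlib

/-- Constant coefficients for a `p`-form (see context): there are an open
neighbourhood `V ⊆ U` of `x`, a `C^∞` diffeomorphism `u` from `V` onto an open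
subset of `ℝⁿ` and a constant multilinear map `c` with
`ω_y (v₁, …, v_p) = c (Du_y v₁, …, Du_y v_p)` on `V`. -/
def HasConstantCoefficientsFormAt (n p : ℕ) (U : Set (Fin n → ℝ))
    (ω : (Fin n → ℝ) → ((Fin n → ℝ) [×p]→L[ℝ] ℝ)) (x : Fin n → ℝ) : Prop :=
  ∃ V : Set (Fin n → ℝ), IsOpen V ∧ x ∈ V ∧ V ⊆ U ∧
    ∃ u : (Fin n → ℝ) → (Fin n → ℝ),
      ContDiffOn ℝ (⊤ : ℕ∞) u V ∧ Set.InjOn u V ∧ IsOpen (u '' V) ∧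
      (∀ y ∈ V, Function.Bijective (fderiv ℝ u y)) ∧
      ∃ c : (Fin n → ℝ) [×p]→L[ℝ] ℝ,
        ∀ y ∈ V, ∀ v : Fin p → (Fin n → ℝ),
          ω y v = c (fun i => fderiv ℝ u y (v i))

/-- `D = {v ∈ ℝⁿ : i_v ω = 0}`, the kernel of the interior product with a
(`p+1`)-multilinear form, as a subspace of `ℝⁿ`. -/
def interiorKernel (n p : ℕ) (ω : (Fin n → ℝ) [×(p + 1)]→L[ℝ] ℝ) :
    Submodule ℝ (Fin n → ℝ) where
  carrier := {v | ∀ z : Fin p → (Fin n → ℝ), ω (Fin.cons v z) = 0}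
  zero_mem' := fun z => ω.map_coord_zero 0 (by simp)
  add_mem' := by
    intro a b ha hb z
    have h : Fin.cons (a + b) z
        = Function.update (Fin.cons a z : Fin (p + 1) → (Fin n → ℝ)) (0 : Fin (p + 1)) (a + b) := by
      simp [Fin.update_cons_zero]
    have ha' : Fin.cons a z = Function.update (Fin.cons a z : Fin (p + 1) → (Fin n → ℝ)) (0 : Fin (p + 1)) a := by
      simp [Fin.update_cons_zero]
    have hb' : Fin.cons b z = Function.update (Fin.cons a z : Fin (p + 1) → (Fin n → ℝ)) (0 : Fin (p + 1)) b := by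
      simp [Fin.update_cons_zero]
    rw [h, ω.map_update_add, ← ha', ← hb', ha z, hb z, add_zero]
  smul_mem' := by
    intro c a ha z
    have h : Fin.cons (c • a) z
        = Function.update (Fin.cons a z : Fin (p + 1) → (Fin n → ℝ)) (0 : Fin (p + 1)) (c • a) := by
      simp [Fin.update_cons_zero]
    have ha' : Fin.cons a z = Function.update (Fin.cons a z : Fin (p + 1) → (Fin n → ℝ)) (0 : Fin (p + 1)) a := by
      simp [Fin.update_cons_zero]
    rw [h, ω.map_update_smul, ← ha', ha z, smul_zero]

/-- if a smooth (`p+1`)-form has constant coefficients near `x`, then on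
some open neighbourhood `V` of `x`: (1) the dimension of
`D_y = {v : i_v ω_y = 0}` is constant in `y ∈ V`, and (2) the distribution `D` is
involutive: the Lie bracket `[X,Y]_y = DY_y(X_y) − DX_y(Y_y)` of smooth vector
fields lying in `D` lies again in `D`. -/
theorem constantCoefficients_kernel_involutive (n p : ℕ) (U : Set (Fin n → ℝ))
    (hU : IsOpen U)
    (ω : (Fin n → ℝ) → ((Fin n → ℝ) [×(p + 1)]→L[ℝ] ℝ))
    (hω : ContDiffOn ℝ (⊤ : ℕ∞) ω U)
    (halt : ∀ y ∈ U, ∀ v : Fin (p + 1) → (Fin n → ℝ), ∀ i j, i ≠ j → v i = v j →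
      ω y v = 0)
    (x : Fin n → ℝ) (hx : x ∈ U)
    (hcc : HasConstantCoefficientsFormAt n (p + 1) U ω x) :
    ∃ V : Set (Fin n → ℝ), IsOpen V ∧ x ∈ V ∧ V ⊆ U ∧
      (∃ k : ℕ, ∀ y ∈ V, Module.finrank ℝ (interiorKernel n p (ω y)) = k) ∧
      (∀ X Y : (Fin n → ℝ) → (Fin n → ℝ),
        ContDiffOn ℝ (⊤ : ℕ∞) X V → ContDiffOn ℝ (⊤ : ℕ∞) Y V →
        (∀ y ∈ V, X y ∈ interiorKernel n p (ω y)) →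
        (∀ y ∈ V, Y y ∈ interiorKernel n p (ω y)) →
        ∀ y ∈ V, fderiv ℝ Y y (X y) - fderiv ℝ X y (Y y) ∈ interiorKernel n p (ω y)) := by
  obtain ⟨V, hV, hxV, hVU, u, hu, huinj, huopen, hbij, c, hrep⟩ := hcc
  set Kc := interiorKernel n p c with hKc
  -- membership characterization
  have memKer : ∀ ω' : (Fin n → ℝ) [×(p + 1)]→L[ℝ] ℝ, ∀ v,
      v ∈ interiorKernel n p ω' ↔ ∀ z : Fin p → (Fin n → ℝ), ω' (Fin.cons v z) = 0 :=
    fun _ _ => Iff.rfl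
  have cons_comp : ∀ (f : (Fin n → ℝ) → (Fin n → ℝ)) (v : Fin n → ℝ)
      (z : Fin p → (Fin n → ℝ)),
      (fun i => f ((Fin.cons v z : Fin (p+1) → _) i))
        = Fin.cons (f v) (fun i => f (z i)) := by
    intro f v z
    funext i
    refine Fin.cases ?_ ?_ i <;> simp
  have mem_iff : ∀ y ∈ V, ∀ v, v ∈ interiorKernel n p (ω y) ↔ fderiv ℝ u y v ∈ Kc := by
    intro y hy v
    rw [memKer, memKer]
    constructor
    · intro h z'
      have hsurj := (hbij y hy).2
      set z : Fin p → (Fin n → ℝ) := fun i => (hsurj (z' i)).choose with hz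
      have hzi : ∀ i, fderiv ℝ u y (z i) = z' i := fun i => (hsurj (z' i)).choose_spec
      have := hrep y hy (Fin.cons v z)
      rw [h z, cons_comp] at this
      have h2 : (Fin.cons (fderiv ℝ u y v) (fun i => fderiv ℝ u y (z i)) : Fin (p+1) → (Fin n → ℝ))
          = Fin.cons (fderiv ℝ u y v) z' := by
        rw [funext hzi]
      rw [h2] at this
      exact this.symm
    · intro h z
      rw [hrep y hy, cons_comp]
      exact h _
  refine ⟨V, hV, hxV, hVU, ?_, ?_⟩
  · -- constant rank
    refine ⟨Module.finrank ℝ Kc, fun y hy => ?_⟩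
    set e : (Fin n → ℝ) ≃ₗ[ℝ] (Fin n → ℝ) :=
      LinearEquiv.ofBijective ((fderiv ℝ u y : (Fin n → ℝ) →L[ℝ] (Fin n → ℝ)) :
        (Fin n → ℝ) →ₗ[ℝ] (Fin n → ℝ)) (hbij y hy) with he
    have hker : interiorKernel n p (ω y) = Submodule.comap (e : (Fin n → ℝ) →ₗ[ℝ] _) Kc := by
      ext v
      rw [Submodule.mem_comap, mem_iff y hy v]
      rfl
    rw [hker, Submodule.comap_equiv_eq_map_symm, LinearEquiv.finrank_map_eq]
  · -- involutivity
    intro X Y hX hY hXD hYD y hy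
    have hXd : DifferentiableAt ℝ X y :=
      (hX.contDiffAt (hV.mem_nhds hy)).differentiableAt (by simp)
    have hYd : DifferentiableAt ℝ Y y :=
      (hY.contDiffAt (hV.mem_nhds hy)).differentiableAt (by simp)
    have hdu : ContDiffOn ℝ (1 : ℕ) (fderiv ℝ u) V :=
      hu.fderiv_of_isOpen hV (by
        calc ((1:ℕ):WithTop ℕ∞) + 1 = ((2:ℕ∞):WithTop ℕ∞) := by norm_cast
        _ ≤ _ := WithTop.coe_le_coe.mpr le_top)
    have hdud : DifferentiableAt ℝ (fderiv ℝ u) y :=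
      (hdu.contDiffAt (hV.mem_nhds hy)).differentiableAt (by simp)
    set du' := fderiv ℝ (fderiv ℝ u) y with hdu'
    set X' := fderiv ℝ X y with hX'
    set Y' := fderiv ℝ Y y with hY'
    set G' : (Fin n → ℝ) →L[ℝ] (Fin n → ℝ) :=
      (fderiv ℝ u y).comp Y' + du'.flip (Y y) with hG'
    set F' : (Fin n → ℝ) →L[ℝ] (Fin n → ℝ) :=
      (fderiv ℝ u y).comp X' + du'.flip (X y) with hF'
    have hG : HasFDerivAt (fun w => fderiv ℝ u w (Y w)) G' y :=
      hdud.hasFDerivAt.clm_apply hYd.hasFDerivAt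
    have hF : HasFDerivAt (fun w => fderiv ℝ u w (X w)) F' y :=
      hdud.hasFDerivAt.clm_apply hXd.hasFDerivAt
    -- derivative of a Kc-valued map stays in Kc
    have key : ∀ (W : (Fin n → ℝ) → (Fin n → ℝ)) (W' : (Fin n → ℝ) →L[ℝ] (Fin n → ℝ)),
        HasFDerivAt (fun w => fderiv ℝ u w (W w)) W' y →
        (∀ w ∈ V, W w ∈ interiorKernel n p (ω w)) →
        ∀ v, W' v ∈ Kc := by
      intro W W' hW hWD v
      rw [memKer]
      intro z
      set Lz : (Fin n → ℝ) →L[ℝ] ℝ :=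
        c.toContinuousLinearMap (Fin.cons 0 z) 0 with hLz
      have hLzapp : ∀ w, Lz w = c (Fin.cons w z) := by
        intro w
        show c (Function.update (Fin.cons 0 z) 0 w) = _
        rw [Fin.update_cons_zero]
      have hcomp : HasFDerivAt (fun w => Lz (fderiv ℝ u w (W w))) (Lz.comp W') y :=
        (Lz.hasFDerivAt).comp y hW
      have hev : (fun w => Lz (fderiv ℝ u w (W w))) =ᶠ[nhds y] (fun _ => (0 : ℝ)) := by
        filter_upwards [hV.mem_nhds hy] with w hw
        rw [hLzapp]
        exact ((mem_iff w hw (W w)).1 (hWD w hw)) z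
      have hzero : HasFDerivAt (fun w => Lz (fderiv ℝ u w (W w))) 0 y :=
        (hasFDerivAt_const (𝕜 := ℝ) (0 : ℝ) y).congr_of_eventuallyEq hev
      have := hzero.unique hcomp
      have h0 : Lz (W' v) = 0 := by
        have := congrArg (fun L => (L : (Fin n → ℝ) →L[ℝ] ℝ) v) this
        simpa using this.symm
      rw [hLzapp] at h0
      exact h0
    have hGK : G' (X y) ∈ Kc := key Y G' hG hYD (X y)
    have hFK : F' (Y y) ∈ Kc := key X F' hF hXD (Y y)
    have hsub : G' (X y) - F' (Y y) ∈ Kc := sub_mem hGK hFK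
    -- symmetry of the second derivative
    have hsymm : IsSymmSndFDerivAt ℝ u y :=
      (hu.contDiffAt (hV.mem_nhds hy)).isSymmSndFDerivAt (by
        rw [minSmoothness_of_isRCLikeNormedField]
        calc (2:WithTop ℕ∞) = ((2:ℕ∞):WithTop ℕ∞) := by norm_cast
        _ ≤ _ := WithTop.coe_le_coe.mpr le_top)
    have hcalc : G' (X y) - F' (Y y) = fderiv ℝ u y (Y' (X y) - X' (Y y)) := by
      have hs : du' (X y) (Y y) = du' (Y y) (X y) := hsymm (X y) (Y y)
      simp only [hG', hF', ContinuousLinearMap.add_apply, ContinuousLinearMap.comp_apply,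
        ContinuousLinearMap.flip_apply, map_sub, hs]
      abel
    rw [mem_iff y hy]
    rw [← hcalc]
    exact hsub
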